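/- Let K be a rationally additive semiring and M a pre-rational monoid. Then every K-automaton A over M is valid: for every m ∈ M, the sum ⟦A⟧(m) = Σ_{w} π_A(w), over all accepting runs w of A whose label is m, exists in K. -/

import Mathlib

/-- A monoid `M` is *pre-rational* if for every finite alphabet `A`, every monoid
homomorphism `μ` from the free monoid `A*` to `M`, and every `m ∈ M`, the language
`μ⁻¹(m) ⊆ A*` is regular. -/
def IsPreRational (M : Type*) [Monoid M] : Prop :=
  ∀ (A : Type) (_ : Fintype A) (μ : FreeMonoid A →* M) (m : M),
    Language.IsRegular {w : List A | μ (FreeMonoid.ofList w) = m}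
/-- A *rationally additive semiring* is a semiring `K` equipped with a partial operator
assigning to some (countable) families `(f i)_{i ∈ I}` a sum `sum f ∈ K` (`Option`-valued:
`some s` means the sum exists and equals `s`, `none` means the family is not summable),
satisfying axioms (Ax1)–(Ax5) of Ésik and Kuich. Disjoint countable partitions of the index
set `I` are represented by a map `p : I → J` whose fibres are the blocks. -/
structure RatAdd (K : Type) [Semiring K] : Type 1 where
  /-- the partial countable-sum operator -/
  sum : {I : Type} → (I → K) → Option K
  /-- (Ax1) every finite family is summable, with the usual finite sum as its sum -/
  ax1 : ∀ {I : Type} [Fintype I] (f : I → K), sum f = some (∑ i, f i)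
  /-- (Ax2) geometric families are summable -/
  ax2 : ∀ α : K, (sum fun n : ℕ => α ^ n).isSome
  /-- (Ax3, left) products distribute on the left over existing sums -/
  ax3l : ∀ {I : Type} [Countable I] (f : I → K) (s β : K),
    sum f = some s → sum (fun i => β * f i) = some (β * s)
  /-- (Ax3, right) products distribute on the right over existing sums -/
  ax3r : ∀ {I : Type} [Countable I] (f : I → K) (s β : K),
    sum f = some s → sum (fun i => f i * β) = some (s * β)
  /-- (Ax4) if each block of a countable partition is summable with sum `r j`, and the
  family of the `r j` is summable with sum `s`, then the whole family is summable with sum `s` -/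
  ax4 : ∀ {I J : Type} [Countable I] [Countable J] (p : I → J) (f : I → K) (r : J → K),
    (∀ j : J, sum (fun i : {i : I // p i = j} => f i.val) = some (r j)) →
    ∀ s : K, sum r = some s → sum f = some s
  /-- (Ax5) if the whole family is summable with sum `s`, and each block of a countable
  partition is summable with sum `r j`, then the family of the `r j` is summable with sum `s` -/
  ax5 : ∀ {I J : Type} [Countable I] [Countable J] (p : I → J) (f : I → K) (r : J → K),
    (∀ j : J, sum (fun i : {i : I // p i = j} => f i.val) = some (r j)) →
    ∀ s : K, sum f = some s → sum r = some s
/-- A `K`-automaton over the monoid `M`: a finite set of states `Q`, sets `init` and `final`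
of initial and final states, and a finite set `Δ ⊆ Q × M × K × Q` of transitions, each
carrying a label in `M` and a weight in `K`. -/
structure WAut (M K : Type) : Type 1 where
  /-- the type of states -/
  Q : Type
  /-- there are finitely many states -/
  finQ : Fintype Q
  /-- the initial states -/
  init : Set Q
  /-- the final states -/
  final : Set Q
  /-- the transitions: source state, label, weight, target state -/
  Δ : Set (Q × M × K × Q)
  /-- there are finitely many transitions -/
  finΔ : Δ.Finite

namespace WAut

variable {M K : Type} [Monoid M] [Semiring K]

/-- A run is a finite sequence of transitions with matching consecutive states. -/
def IsRun (A : WAut M K) (r : List ↥A.Δ) : Prop :=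
  List.Chain' (fun x y : ↥A.Δ => x.val.2.2.2 = y.val.1) r

/-- An accepting run: a (nonempty) run starting in an initial state and ending
in a final state. -/
def IsAccepting (A : WAut M K) (r : List ↥A.Δ) : Prop :=
  A.IsRun r ∧ ∃ h : r ≠ [], (r.head h).val.1 ∈ A.init ∧ (r.getLast h).val.2.2.2 ∈ A.final

/-- The label of a run: the product in `M` of the labels of its transitions. -/
def label (A : WAut M K) (r : List ↥A.Δ) : M := (r.map fun t => t.val.2.1).prod

/-- The weight of a run: the product in `K` of the weights of its transitions. -/
def weight (A : WAut M K) (r : List ↥A.Δ) : K := (r.map fun t => t.val.2.2.1).prod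

/-- The semantics `⟦A⟧(m)` of a weighted automaton at `m`: the sum of the weights of the
accepting runs labelled `m`, when this sum exists (`none` otherwise). -/
noncomputable def sem (R : RatAdd K) (A : WAut M K) (m : M) : Option K :=
  R.sum (fun r : {r : List ↥A.Δ // A.IsAccepting r ∧ A.label r = m} => A.weight r.val)

/-- The ambiguity of a weighted automaton at `m`: the number (in `ℕ ∪ {∞}`) of accepting
runs with label `m`. -/
noncomputable def amb (A : WAut M K) (m : M) : ℕ∞ :=
  {r : List ↥A.Δ | A.IsAccepting r ∧ A.label r = m}.encard

end WAut


variable {K : Type} [Semiring K]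

namespace RatAdd

lemma sum_of_isEmpty (R : RatAdd K) {I : Type} [IsEmpty I] (f : I → K) :
    R.sum f = some 0 := by
  have : Fintype I := Fintype.ofIsEmpty
  simpa using R.ax1 f

lemma sum_of_unique (R : RatAdd K) {I : Type} [Unique I] (f : I → K) :
    R.sum f = some (f default) := by
  have : Fintype I := Fintype.ofFinite I
  rw [R.ax1 f, Fintype.sum_unique]

lemma sum_of_unique' (R : RatAdd K) {I : Type} (f : I → K) (i₀ : I) (h : ∀ i : I, i = i₀) :
    R.sum f = some (f i₀) := by
  letI : Unique I := ⟨⟨i₀⟩, h⟩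
  exact R.sum_of_unique f

lemma sum_equiv (R : RatAdd K) {I I' : Type} [Countable I] [Countable I'] (e : I' ≃ I)
    (f : I → K) (s : K) (h : R.sum f = some s) :
    R.sum (fun i' => f (e i')) = some s := by
  refine R.ax4 (fun i' => e i') _ f ?_ s h
  intro j
  have hu : Unique {i' : I' // e i' = j} :=
    ⟨⟨⟨e.symm j, by simp⟩⟩, by rintro ⟨i, hi⟩; apply Subtype.ext; simp [← hi]⟩
  rw [R.sum_of_unique]
  have : e (hu.default).val = j := (hu.default).prop
  rw [this]

lemma sum_prod (R : RatAdd K) {I J : Type} [Countable I] [Countable J]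
    (f : I → K) (g : J → K) (a b : K) (hf : R.sum f = some a) (hg : R.sum g = some b) :
    R.sum (fun p : I × J => f p.1 * g p.2) = some (a * b) := by
  refine R.ax4 Prod.fst _ (fun i => f i * b) ?_ _ (R.ax3r f a b hf)
  intro i
  have key : R.sum (fun j : J => f i * g j) = some (f i * b) := R.ax3l g b (f i) hg
  have hfun : (fun p : {p : I × J // p.1 = i} => f p.val.1 * g p.val.2)
      = fun p => f i * g p.val.2 := funext fun p => by rw [p.prop]
  rw [hfun]
  exact R.sum_equiv
    (⟨fun p => p.val.2, fun j => ⟨(i, j), rfl⟩, by rintro ⟨⟨i', j⟩, rfl⟩; rfl, fun j => rfl⟩ :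
      {p : I × J // p.1 = i} ≃ J)
    (fun j : J => f i * g j) (f i * b) key

lemma sum_sumtype (R : RatAdd K) {I J : Type} [Countable I] [Countable J]
    (f : I ⊕ J → K) (a b : K)
    (hf : R.sum (fun i => f (.inl i)) = some a) (hg : R.sum (fun j => f (.inr j)) = some b) :
    R.sum f = some (a + b) := by
  refine R.ax4 Sum.isLeft f (fun bl => if bl then a else b) ?_ (a + b) ?_
  · intro bl
    cases bl with
    | true =>
      show R.sum _ = some a
      have hfun : (fun x : {x : I ⊕ J // x.isLeft = true} => f x.val)
          = fun x => f (.inl (x.val.getLeft x.prop)) := by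
        funext x
        obtain ⟨v, h⟩ := x
        cases v
        · rfl
        · simp at h
      rw [hfun]
      exact R.sum_equiv
        (⟨fun x => x.val.getLeft x.prop, fun i => ⟨.inl i, rfl⟩,
         by rintro ⟨v, h⟩; cases v with | inl i => rfl | inr j => exact absurd h (by simp), fun i => rfl⟩ :
          {x : I ⊕ J // x.isLeft = true} ≃ I)
        (fun i => f (.inl i)) a hf
    | false =>
      show R.sum _ = some b
      have hfun : (fun x : {x : I ⊕ J // x.isLeft = false} => f x.val)
          = fun x => f (.inr (x.val.getRight (by simp [Sum.not_isLeft.mp, x.prop] ))) := by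
        funext x
        obtain ⟨v, h⟩ := x
        cases v
        · simp at h
        · rfl
      rw [hfun]
      exact R.sum_equiv
        (⟨fun x => x.val.getRight (by simp [Sum.not_isLeft.mp, x.prop]),
         fun j => ⟨.inr j, rfl⟩,
         by rintro ⟨v, h⟩; cases v with | inl i => exact absurd h (by simp) | inr j => rfl, fun j => rfl⟩ :
          {x : I ⊕ J // x.isLeft = false} ≃ J)
        (fun j => f (.inr j)) b hg
  · rw [R.ax1]
    congr 1
    simp

end RatAdd

namespace RatAdd

lemma sum_len (R : RatAdd K) {X : Type} [Countable X] (f : X → K) (a : K)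
    (hf : R.sum f = some a) (n : ℕ) :
    R.sum (fun l : {l : List X // l.length = n} => (l.val.map f).prod) = some (a ^ n) := by
  induction n with
  | zero =>
    letI : Unique {l : List X // l.length = 0} :=
      ⟨⟨⟨[], rfl⟩⟩, by rintro ⟨l, hl⟩; apply Subtype.ext; exact List.length_eq_zero_iff.mp hl⟩
    rw [R.sum_of_unique]
    simp
    rfl
  | succ n ih =>
    have key : R.sum (fun p : X × {l : List X // l.length = n} =>
        f p.1 * (p.2.val.map f).prod) = some (a * a ^ n) := R.sum_prod _ _ _ _ hf ih
    let e : {l : List X // l.length = n + 1} ≃ X × {l : List X // l.length = n} :=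
      ⟨fun l => (l.val.head (by intro h; have hp := l.prop; rw [h] at hp; simp at hp),
         ⟨l.val.tail, by simp [l.prop]⟩),
       fun p => ⟨p.1 :: p.2.val, by simp [p.2.prop]⟩,
       by rintro ⟨l, hl⟩
          apply Subtype.ext
          exact List.cons_head_tail _,
       by rintro ⟨x, l, hl⟩; rfl⟩
    have key2 := R.sum_equiv e (fun p : X × {l : List X // l.length = n} =>
      f p.1 * (p.2.val.map f).prod) (a * a ^ n) key
    have hfun : (fun l : {l : List X // l.length = n + 1} => (l.val.map f).prod)
        = fun l => f (e l).1 * ((e l).2.val.map f).prod := by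
      funext l
      obtain ⟨l, hl⟩ := l
      cases l with
      | nil => simp at hl
      | cons x t => simp [e]
    rw [hfun, pow_succ']
    exact key2

lemma sum_list (R : RatAdd K) {X : Type} [Countable X] (f : X → K) (a : K)
    (hf : R.sum f = some a) :
    ∃ t : K, R.sum (fun l : List X => (l.map f).prod) = some t := by
  obtain ⟨t, ht⟩ := Option.isSome_iff_exists.mp (R.ax2 a)
  refine ⟨t, R.ax4 List.length _ (fun n : ℕ => a ^ n) ?_ t ht⟩
  intro n
  exact R.sum_len f a hf n

end RatAdd

namespace DFAPath

variable {α σ : Type} [DecidableEq σ] (M : DFA α σ)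

/-- Nonempty words driving the DFA from `p` to `q` with all strictly internal
states inside `S`. -/
def P (S : Finset σ) (p q : σ) (w : List α) : Prop :=
  w ≠ [] ∧ M.evalFrom p w = q ∧ ∀ i, 0 < i → i < w.length → M.evalFrom p (w.take i) ∈ S

omit [DecidableEq σ] in
lemma P.mono {S T : Finset σ} (hST : S ⊆ T) {p q : σ} {w : List α} (h : P M S p q w) :
    P M T p q w :=
  ⟨h.1, h.2.1, fun i h1 h2 => hST (h.2.2 i h1 h2)⟩

lemma P_append {S : Finset σ} {x p q : σ} {u v : List α}
    (hu : P M (insert x S) p x u) (hv : P M (insert x S) x q v) :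
    P M (insert x S) p q (u ++ v) := by
  refine ⟨by simp [hu.1], by rw [M.evalFrom_of_append, hu.2.1, hv.2.1], ?_⟩
  intro i h1 h2
  rcases lt_trichotomy i u.length with h | h | h
  · rw [List.take_append_of_le_length h.le]
    exact hu.2.2 i h1 h
  · subst h
    rw [List.take_left]
    rw [hu.2.1]
    exact Finset.mem_insert_self x S
  · have hi : i = u.length + (i - u.length) := by omega
    rw [hi, List.take_length_add_append, M.evalFrom_of_append, hu.2.1]
    have h2' : i - u.length < v.length := by
      simp only [List.length_append] at h2
      omega
    exact hv.2.2 _ (by omega) h2'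

lemma P_flatten_append {S : Finset σ} {x q : σ}
    (l : List {w : List α // P M S x x w}) (z : {w : List α // P M S x q w}) :
    P M (insert x S) x q ((l.map Subtype.val).flatten ++ z.val) := by
  induction l with
  | nil => simpa using z.prop.mono M (Finset.subset_insert x S)
  | cons u t ih =>
    have : ((u :: t).map Subtype.val).flatten ++ z.val
        = u.val ++ ((t.map Subtype.val).flatten ++ z.val) := by
      simp
    rw [this]
    exact P_append M (u.prop.mono M (Finset.subset_insert x S)) ih

/-- Unique decomposition of a path from `x` to `q` through `insert x S` into
a list of `x`-to-`x` loops avoiding `x` internally, followed by a tail avoiding `x`. -/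
lemma dec_from_x {S : Finset σ} {x : σ} (hx : x ∉ S) (q : σ) :
    ∀ w, P M (insert x S) x q w →
    ∃! pr : List {w : List α // P M S x x w} × {w : List α // P M S x q w},
      (pr.1.map Subtype.val).flatten ++ pr.2.val = w := by
  classical
  suffices H : ∀ n w, w.length ≤ n → P M (insert x S) x q w →
      ∃! pr : List {w : List α // P M S x x w} × {w : List α // P M S x q w},
        (pr.1.map Subtype.val).flatten ++ pr.2.val = w from
    fun w hw => H w.length w le_rfl hw
  intro n
  induction n with
  | zero => intro w hlen hw; exact absurd (List.length_eq_zero_iff.mp (Nat.le_zero.mp hlen)) hw.1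
  | succ n ihn =>
    intro w hlen hw
    by_cases hT : ∃ i, 0 < i ∧ i < w.length ∧ M.evalFrom x (w.take i) = x
    · obtain ⟨h0, hltw, hevx⟩ := Nat.find_spec hT
      set i₀ := Nat.find hT with hi₀
      set u := w.take i₀ with hu_def
      set v := w.drop i₀ with hv_def
      have huv : u ++ v = w := List.take_append_drop i₀ w
      have hulen : u.length = i₀ := by
        rw [hu_def, List.length_take]
        omega
      have hu : P M S x x u := by
        refine ⟨by rw [← List.length_pos_iff]; omega, hevx, ?_⟩
        intro j hj0 hjlen
        rw [hulen] at hjlen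
        have htk : u.take j = w.take j := by rw [hu_def, List.take_take]; congr 1; omega
        rw [htk]
        have hj : j < w.length := by omega
        have := hw.2.2 j hj0 hj
        rcases Finset.mem_insert.mp this with h | h
        · exact absurd ⟨hj0, hj, h⟩ (Nat.find_min hT hjlen)
        · exact h
      have hvlen : v.length = w.length - i₀ := by rw [hv_def, List.length_drop]
      have hv : P M (insert x S) x q v := by
        refine ⟨by rw [← List.length_pos_iff]; omega, ?_, ?_⟩
        · have := hw.2.1
          rw [← huv, M.evalFrom_of_append, hevx] at this
          exact this
        · intro j hj0 hjlen
          have htk : w.take (i₀ + j) = u ++ v.take j := by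
            rw [List.take_add, ← hu_def, ← hv_def]
          have hlt : i₀ + j < w.length := by omega
          have := hw.2.2 (i₀ + j) (by omega) hlt
          rw [htk, M.evalFrom_of_append, hevx] at this
          exact this
      obtain ⟨⟨l₁, z₁⟩, hglue, huniq⟩ := ihn v (by omega) hv
      refine ⟨(⟨u, hu⟩ :: l₁, z₁), ?_, ?_⟩
      · show ((List.map Subtype.val (⟨u, hu⟩ :: l₁)).flatten) ++ z₁.val = w
        rw [List.map_cons, List.flatten_cons, List.append_assoc]
        rw [show (List.map Subtype.val l₁).flatten ++ z₁.val = v from hglue]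
        exact huv
      · rintro ⟨l, z⟩ hlz
        cases l with
        | nil =>
          exfalso
          simp only [List.map_nil, List.flatten_nil, List.nil_append] at hlz
          have := z.prop.2.2 i₀ h0 (by rw [hlz]; exact hltw)
          rw [hlz] at this
          rw [hevx] at this
          exact hx this
        | cons u₁ l' =>
          simp only [List.map_cons, List.flatten_cons, List.append_assoc] at hlz
          -- hlz : u₁.val ++ ((l'.map Subtype.val).flatten ++ z.val) = w
          have hu₁pre : w.take u₁.val.length = u₁.val := by
            rw [← hlz, List.take_left]
          have hu₁lt : u₁.val.length < w.length := by
            rw [← hlz]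
            simp only [List.length_append]
            have := List.length_pos_iff.mpr z.prop.1
            omega
          have hu₁pos : 0 < u₁.val.length := List.length_pos_iff.mpr u₁.prop.1
          have hfind : i₀ ≤ u₁.val.length :=
            Nat.find_min' hT ⟨hu₁pos, hu₁lt, by rw [hu₁pre]; exact u₁.prop.2.1⟩
          have heq : u₁.val.length = i₀ := by
            by_contra hne
            have hlt' : i₀ < u₁.val.length := by omega
            have := u₁.prop.2.2 i₀ h0 hlt'
            have htk : u₁.val.take i₀ = w.take i₀ := by
              conv_rhs => rw [← hlz]
              rw [List.take_append_of_le_length hlt'.le]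
            rw [htk, hevx] at this
            exact hx this
          have hu₁val : u₁.val = u := by rw [← hu₁pre, heq, ← hu_def]
          have hrest : (l'.map Subtype.val).flatten ++ z.val = v := by
            have : u ++ ((l'.map Subtype.val).flatten ++ z.val) = u ++ v := by
              rw [huv, ← hlz, hu₁val]
            exact (List.append_cancel_left this)
          have heq2 := huniq (l', z) hrest
          have h1 : l' = l₁ := congrArg Prod.fst heq2
          have h2 : z = z₁ := congrArg Prod.snd heq2
          subst h1
          subst h2
          have hfin : u₁ = ⟨u, hu⟩ := Subtype.ext hu₁val
          rw [hfin]
    · push_neg at hT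
      have hwS : P M S x q w := by
        refine ⟨hw.1, hw.2.1, ?_⟩
        intro i h1 h2
        have := hw.2.2 i h1 h2
        rcases Finset.mem_insert.mp this with h | h
        · exact absurd h (hT i h1 h2)
        · exact h
      refine ⟨([], ⟨w, hwS⟩), by simp, ?_⟩
      rintro ⟨l, z⟩ hlz
      cases l with
      | nil =>
        simp only [List.map_nil, List.flatten_nil, List.nil_append] at hlz
        have : z = ⟨w, hwS⟩ := Subtype.ext hlz
        rw [this]
      | cons u l' =>
        exfalso
        simp only [List.map_cons, List.flatten_cons, List.append_assoc] at hlz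
        have hu₁pre : w.take u.val.length = u.val := by rw [← hlz, List.take_left]
        have hu₁lt : u.val.length < w.length := by
          rw [← hlz]
          simp only [List.length_append]
          have := List.length_pos_iff.mpr z.prop.1
          omega
        exact hT u.val.length (List.length_pos_iff.mpr u.prop.1) hu₁lt
          (by rw [hu₁pre]; exact u.prop.2.1)

end DFAPath

namespace DFAPath

variable {α σ : Type} [DecidableEq σ] (M : DFA α σ)

/-- The decomposition type for paths through `insert x S` from `p` to `q`. -/
abbrev Dec (S : Finset σ) (x p q : σ) : Type :=
  {w : List α // P M S p q w} ⊕
    ({w : List α // P M S p x w} ×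
      (List {w : List α // P M S x x w} × {w : List α // P M S x q w}))

/-- Gluing a decomposition back into a word. -/
def glue {S : Finset σ} {x p q : σ} (d : Dec M S x p q) : List α :=
  match d with
  | .inl u => u.val
  | .inr (u, l, z) => u.val ++ ((l.map Subtype.val).flatten ++ z.val)

lemma glue_mem {S : Finset σ} {x p q : σ} (d : Dec M S x p q) :
    P M (insert x S) p q (glue M d) := by
  cases d with
  | inl u => exact u.prop.mono M (Finset.subset_insert x S)
  | inr t =>
    obtain ⟨u, l, z⟩ := t
    exact P_append M (u.prop.mono M (Finset.subset_insert x S)) (P_flatten_append M l z)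

lemma dec_gen {S : Finset σ} {x : σ} (hx : x ∉ S) (p q : σ) :
    ∀ w, P M (insert x S) p q w → ∃! d : Dec M S x p q, glue M d = w := by
  classical
  intro w hw
  by_cases hT : ∃ i, 0 < i ∧ i < w.length ∧ M.evalFrom p (w.take i) = x
  · obtain ⟨h0, hltw, hevx⟩ := Nat.find_spec hT
    set i₀ := Nat.find hT with hi₀
    set u := w.take i₀ with hu_def
    set v := w.drop i₀ with hv_def
    have huv : u ++ v = w := List.take_append_drop i₀ w
    have hulen : u.length = i₀ := by
      rw [hu_def, List.length_take]
      omega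
    have hu : P M S p x u := by
      refine ⟨by rw [← List.length_pos_iff]; omega, hevx, ?_⟩
      intro j hj0 hjlen
      rw [hulen] at hjlen
      have htk : u.take j = w.take j := by rw [hu_def, List.take_take]; congr 1; omega
      rw [htk]
      have hj : j < w.length := by omega
      have := hw.2.2 j hj0 hj
      rcases Finset.mem_insert.mp this with h | h
      · exact absurd ⟨hj0, hj, h⟩ (Nat.find_min hT hjlen)
      · exact h
    have hvlen : v.length = w.length - i₀ := by rw [hv_def, List.length_drop]
    have hv : P M (insert x S) x q v := by
      refine ⟨by rw [← List.length_pos_iff]; omega, ?_, ?_⟩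
      · have := hw.2.1
        rw [← huv, M.evalFrom_of_append, hevx] at this
        exact this
      · intro j hj0 hjlen
        have htk : w.take (i₀ + j) = u ++ v.take j := by
          rw [List.take_add, ← hu_def, ← hv_def]
        have hlt : i₀ + j < w.length := by omega
        have := hw.2.2 (i₀ + j) (by omega) hlt
        rw [htk, M.evalFrom_of_append, hevx] at this
        exact this
    obtain ⟨⟨l₁, z₁⟩, hglue, huniq⟩ := dec_from_x M hx q v hv
    refine ⟨.inr (⟨u, hu⟩, (l₁, z₁)), ?_, ?_⟩
    · show u ++ ((List.map Subtype.val l₁).flatten ++ z₁.val) = w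
      rw [show (List.map Subtype.val l₁).flatten ++ z₁.val = v from hglue]
      exact huv
    · rintro (u' | ⟨u₁, l, z⟩) hlz
      · exfalso
        have := u'.prop.2.2 i₀ h0 (by rw [show glue M (.inl u') = u'.val from rfl] at hlz; rw [hlz]; exact hltw)
        rw [show glue M (.inl u') = u'.val from rfl] at hlz
        rw [hlz, hevx] at this
        exact hx this
      · have hlz' : u₁.val ++ ((l.map Subtype.val).flatten ++ z.val) = w := hlz
        have hu₁pre : w.take u₁.val.length = u₁.val := by
          rw [← hlz', List.take_left]
        have hu₁lt : u₁.val.length < w.length := by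
          rw [← hlz']
          simp only [List.length_append]
          have := List.length_pos_iff.mpr z.prop.1
          omega
        have hu₁pos : 0 < u₁.val.length := List.length_pos_iff.mpr u₁.prop.1
        have hfind : i₀ ≤ u₁.val.length :=
          Nat.find_min' hT ⟨hu₁pos, hu₁lt, by rw [hu₁pre]; exact u₁.prop.2.1⟩
        have heq : u₁.val.length = i₀ := by
          by_contra hne
          have hlt' : i₀ < u₁.val.length := by omega
          have := u₁.prop.2.2 i₀ h0 hlt'
          have htk : u₁.val.take i₀ = w.take i₀ := by
            conv_rhs => rw [← hlz']
            rw [List.take_append_of_le_length hlt'.le]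
          rw [htk, hevx] at this
          exact hx this
        have hu₁val : u₁.val = u := by rw [← hu₁pre, heq, ← hu_def]
        have hrest : (l.map Subtype.val).flatten ++ z.val = v := by
          have : u ++ ((l.map Subtype.val).flatten ++ z.val) = u ++ v := by
            rw [huv, ← hlz', hu₁val]
          exact List.append_cancel_left this
        have heq2 := huniq (l, z) hrest
        have h1 : l = l₁ := congrArg Prod.fst heq2
        have h2 : z = z₁ := congrArg Prod.snd heq2
        subst h1
        subst h2
        have hfin : u₁ = ⟨u, hu⟩ := Subtype.ext hu₁val
        rw [hfin]
  · push_neg at hT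
    have hwS : P M S p q w := by
      refine ⟨hw.1, hw.2.1, ?_⟩
      intro i h1 h2
      have := hw.2.2 i h1 h2
      rcases Finset.mem_insert.mp this with h | h
      · exact absurd h (hT i h1 h2)
      · exact h
    refine ⟨.inl ⟨w, hwS⟩, rfl, ?_⟩
    rintro (u' | ⟨u₁, l, z⟩) hlz
    · have : u' = ⟨w, hwS⟩ := Subtype.ext hlz
      rw [this]
    · exfalso
      have hlz' : u₁.val ++ ((l.map Subtype.val).flatten ++ z.val) = w := hlz
      have hu₁pre : w.take u₁.val.length = u₁.val := by rw [← hlz', List.take_left]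
      have hu₁lt : u₁.val.length < w.length := by
        rw [← hlz']
        simp only [List.length_append]
        have := List.length_pos_iff.mpr z.prop.1
        omega
      exact hT u₁.val.length (List.length_pos_iff.mpr u₁.prop.1) hu₁lt
        (by rw [hu₁pre]; exact u₁.prop.2.1)

lemma sum_P {K : Type} [Semiring K] (R : RatAdd K) [Fintype α] (wt : α → K)
    (S : Finset σ) :
    ∀ p q : σ, ∃ s : K,
      R.sum (fun w : {w : List α // P M S p q w} => (w.val.map wt).prod) = some s := by
  induction S using Finset.induction_on with
  | empty =>
    intro p q
    have hsing : ∀ w : List α, P M ∅ p q w → w.length = 1 := by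
      intro w hw
      rcases w with _ | ⟨a, t⟩
      · exact absurd rfl hw.1
      rcases t with _ | ⟨b, t'⟩
      · rfl
      · have := hw.2.2 1 one_pos (by simp)
        exact absurd this (Finset.notMem_empty _)
    have hfin : Finite {w : List α // P M ∅ p q w} := by
      refine Finite.of_injective (fun w => w.val.head?) ?_
      rintro ⟨w1, h1⟩ ⟨w2, h2⟩ h
      obtain ⟨x1, rfl⟩ := List.length_eq_one_iff.mp (hsing _ h1)
      obtain ⟨x2, rfl⟩ := List.length_eq_one_iff.mp (hsing _ h2)
      simp only [List.head?_cons, Option.some.injEq] at h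
      subst h
      rfl
    letI : Fintype {w : List α // P M ∅ p q w} := Fintype.ofFinite _
    exact ⟨_, R.ax1 _⟩
  | @insert x S hx ih =>
    intro p q
    obtain ⟨a, ha⟩ := ih x x
    obtain ⟨b, hb⟩ := ih p x
    obtain ⟨c, hc⟩ := ih x q
    obtain ⟨d0, hd0⟩ := ih p q
    obtain ⟨t, ht⟩ := R.sum_list (fun w : {w : List α // P M S x x w} => (w.val.map wt).prod) a ha
    have hflat : ∀ l : List {w : List α // P M S x x w},
        (((l.map Subtype.val).flatten).map wt).prod
          = (l.map (fun w => (w.val.map wt).prod)).prod := by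
      intro l
      induction l with
      | nil => simp
      | cons u tl ihl =>
        rw [List.map_cons, List.flatten_cons, List.map_append, List.prod_append, ihl,
          List.map_cons, List.prod_cons]
    have h2 : R.sum (fun pr : List {w : List α // P M S x x w} × {w : List α // P M S x q w} =>
        (pr.1.map (fun w => (w.val.map wt).prod)).prod * (pr.2.val.map wt).prod)
        = some (t * c) := R.sum_prod _ _ _ _ ht hc
    have h3 : R.sum (fun tr : {w : List α // P M S p x w} ×
        (List {w : List α // P M S x x w} × {w : List α // P M S x q w}) =>
        (tr.1.val.map wt).prod *
          ((tr.2.1.map (fun w => (w.val.map wt).prod)).prod * (tr.2.2.val.map wt).prod))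
        = some (b * (t * c)) := R.sum_prod _ _ _ _ hb h2
    set F : Dec M S x p q → K := fun d => ((glue M d).map wt).prod with hF
    have h4 : R.sum (fun tr => F (.inr tr)) = some (b * (t * c)) := by
      have hfun : (fun tr : {w : List α // P M S p x w} ×
          (List {w : List α // P M S x x w} × {w : List α // P M S x q w}) => F (.inr tr))
          = fun tr => (tr.1.val.map wt).prod *
            ((tr.2.1.map (fun w => (w.val.map wt).prod)).prod * (tr.2.2.val.map wt).prod) := by
        funext tr
        obtain ⟨u, l, z⟩ := tr
        show ((u.val ++ ((l.map Subtype.val).flatten ++ z.val)).map wt).prod = _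
        rw [List.map_append, List.prod_append, List.map_append, List.prod_append, hflat]
      rw [hfun]
      exact h3
    have h4l : R.sum (fun u => F (.inl u)) = some d0 := hd0
    have h5 : R.sum F = some (d0 + b * (t * c)) := R.sum_sumtype F _ _ h4l h4
    refine ⟨d0 + b * (t * c), ?_⟩
    refine R.ax5 (fun d : Dec M S x p q => (⟨glue M d, glue_mem M d⟩ :
      {w : List α // P M (insert x S) p q w})) F _ ?_ _ h5
    intro w0
    have hEU := dec_gen M hx p q w0.val w0.prop
    refine Eq.trans (R.sum_of_unique' _ ⟨hEU.choose, Subtype.ext hEU.choose_spec.1⟩ ?_) ?_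
    · rintro ⟨d, hd⟩
      apply Subtype.ext
      exact hEU.choose_spec.2 d (congrArg Subtype.val hd)
    · show some ((List.map wt (glue M hEU.choose)).prod) = _
      rw [hEU.choose_spec.1]

end DFAPath

lemma sum_regular {K : Type} [Semiring K] (R : RatAdd K) {α : Type} [Fintype α]
    {L : Language α} (h : L.IsRegular) (wt : α → K) :
    ∃ s : K, R.sum (fun w : {w : List α // w ∈ L} => (w.val.map wt).prod) = some s := by
  classical
  obtain ⟨σ, inst, M, rfl⟩ := h
  have key : ∀ q : σ, ∃ s : K, R.sum
      (fun w : {w : List α // DFAPath.P M Finset.univ M.start q w} => (w.val.map wt).prod)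
      = some s :=
    fun q => DFAPath.sum_P M R wt Finset.univ M.start q
  choose sq hsq using key
  set r : Option σ → K := fun o =>
    Option.rec (if ([] : List α) ∈ M.accepts then (1 : K) else 0)
      (fun q => if q ∈ M.accept then sq q else 0) o with hr
  set pf : {w : List α // w ∈ M.accepts} → Option σ := fun w =>
    if w.val = [] then none else some (M.eval w.val) with hpf
  refine ⟨∑ o : Option σ, r o, R.ax4 pf _ r ?_ _ (R.ax1 r)⟩
  intro o
  cases o with
  | none =>
    by_cases h0 : ([] : List α) ∈ M.accepts
    · have hun : ∀ y : {y : {w : List α // w ∈ M.accepts} // pf y = none},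
          y = ⟨⟨[], h0⟩, by simp [hpf]⟩ := by
        rintro ⟨⟨w, hw⟩, hy⟩
        by_cases hnil : w = []
        · apply Subtype.ext; apply Subtype.ext; exact hnil
        · simp only [hpf] at hy
          simp only [if_neg hnil] at hy
          exact absurd hy (by simp)
      rw [R.sum_of_unique' _ _ hun]
      show some ((List.map wt []).prod) = some (r none)
      rw [hr]
      simp [h0]
    · have : IsEmpty {y : {w : List α // w ∈ M.accepts} // pf y = none} := by
        constructor
        rintro ⟨⟨w, hw⟩, hy⟩
        by_cases hnil : w = []
        · exact h0 (hnil ▸ hw)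
        · simp only [hpf] at hy
          simp only [if_neg hnil] at hy
          exact absurd hy (by simp)
      rw [R.sum_of_isEmpty]
      rw [hr]
      simp [h0]
  | some q =>
    by_cases hq : q ∈ M.accept
    · let e : {y : {w : List α // w ∈ M.accepts} // pf y = some q}
          ≃ {w : List α // DFAPath.P M Finset.univ M.start q w} :=
      { toFun := fun y => ⟨y.val.val, by
          have hy := y.prop
          simp only [hpf] at hy
          by_cases hnil : y.val.val = []
          · rw [if_pos hnil] at hy; exact absurd hy (by simp)
          · rw [if_neg hnil] at hy
            refine ⟨hnil, by injection hy, fun i _ _ => Finset.mem_univ _⟩⟩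
        invFun := fun w => ⟨⟨w.val, by
            have : M.eval w.val ∈ M.accept := by
              show M.evalFrom M.start w.val ∈ M.accept
              rw [w.prop.2.1]; exact hq
            exact this⟩, by
          rw [hpf]
          simp only [if_neg w.prop.1]
          congr 1
          exact w.prop.2.1⟩
        left_inv := fun y => by apply Subtype.ext; apply Subtype.ext; rfl
        right_inv := fun w => by apply Subtype.ext; rfl }
      have h2 : R.sum (fun y : {y : {w : List α // w ∈ M.accepts} // pf y = some q} =>
          (List.map wt y.val.val).prod) = some (sq q) :=
        R.sum_equiv e
          (fun w : {w : List α // DFAPath.P M Finset.univ M.start q w} => (w.val.map wt).prod)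
          (sq q) (hsq q)
      refine h2.trans ?_
      rw [hr]
      simp [hq]
    · have : IsEmpty {y : {w : List α // w ∈ M.accepts} // pf y = some q} := by
        constructor
        rintro ⟨⟨w, hw⟩, hy⟩
        simp only [hpf] at hy
        by_cases hnil : w = []
        · rw [if_pos hnil] at hy; exact absurd hy (by simp)
        · rw [if_neg hnil] at hy
          have : M.eval w = q := by injection hy
          exact hq (this ▸ hw)
      rw [R.sum_of_isEmpty]
      rw [hr]
      simp [hq]

lemma isRegular_inter {α : Type} {L1 L2 : Set (List α)}
    (h1 : Language.IsRegular (L1 : Language α)) (h2 : Language.IsRegular (L2 : Language α)) :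
    Language.IsRegular ({w : List α | w ∈ L1 ∧ w ∈ L2} : Language α) := by
  obtain ⟨σ1, i1, M1, hM1⟩ := h1
  obtain ⟨σ2, i2, M2, hM2⟩ := h2
  let N : DFA α (σ1 × σ2) :=
    { step := fun s a => (M1.step s.1 a, M2.step s.2 a)
      start := (M1.start, M2.start)
      accept := {s | s.1 ∈ M1.accept ∧ s.2 ∈ M2.accept} }
  refine ⟨σ1 × σ2, inferInstance, N, ?_⟩
  have hev : ∀ (w : List α) (s1 : σ1) (s2 : σ2),
      N.evalFrom (s1, s2) w = (M1.evalFrom s1 w, M2.evalFrom s2 w) := by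
    intro w
    induction w with
    | nil => intro s1 s2; rfl
    | cons a t ih => intro s1 s2; exact ih (M1.step s1 a) (M2.step s2 a)
  ext w
  have : w ∈ N.accepts ↔ N.eval w ∈ N.accept := Iff.rfl
  rw [this]
  show N.evalFrom (M1.start, M2.start) w ∈ N.accept ↔ _
  rw [hev]
  show (M1.evalFrom M1.start w ∈ M1.accept ∧ M2.evalFrom M2.start w ∈ M2.accept) ↔ _
  rw [show (M1.evalFrom M1.start w ∈ M1.accept) = (w ∈ M1.accepts) from rfl,
    show (M2.evalFrom M2.start w ∈ M2.accept) = (w ∈ M2.accepts) from rfl, hM1, hM2]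
  rfl

open Classical in
/-- A DFA recognizing the accepting runs of a weighted automaton. -/
noncomputable def accDFA {M K : Type} [Monoid M] [Semiring K] (A : WAut M K) :
    DFA ↥A.Δ (Option (Option ↥A.Δ)) where
  step s t :=
    match s with
    | none => none
    | some none => if t.val.1 ∈ A.init then some (some t) else none
    | some (some u) => if u.val.2.2.2 = t.val.1 then some (some t) else none
  start := some none
  accept := {s | ∃ t : ↥A.Δ, s = some (some t) ∧ t.val.2.2.2 ∈ A.final}

lemma accDFA_dead {M K : Type} [Monoid M] [Semiring K] (A : WAut M K) :
    ∀ r : List ↥A.Δ, (accDFA A).evalFrom none r = none := by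
  intro r
  induction r with
  | nil => rfl
  | cons u t ih => exact ih

lemma accDFA_aux {M K : Type} [Monoid M] [Semiring K] (A : WAut M K) :
    ∀ (r : List ↥A.Δ) (v t : ↥A.Δ),
      (accDFA A).evalFrom (some (some v)) r = some (some t) ↔
        (List.Chain' (fun x y : ↥A.Δ => x.val.2.2.2 = y.val.1) (v :: r) ∧
          (v :: r).getLast (List.cons_ne_nil _ _) = t) := by
  classical
  intro r
  induction r with
  | nil =>
    intro v t
    constructor
    · intro h
      have hv : v = t := by
        simpa using h
      simp [hv, List.Chain', List.isChain_singleton]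
    · rintro ⟨-, h⟩
      simp only [List.getLast_singleton] at h
      rw [show (accDFA A).evalFrom (some (some v)) [] = some (some v) from rfl, h]
  | cons u r ih =>
    intro v t
    show (accDFA A).evalFrom ((accDFA A).step (some (some v)) u) r = some (some t) ↔ _
    by_cases hvu : v.val.2.2.2 = u.val.1
    · have hstep : (accDFA A).step (some (some v)) u = some (some u) := by
        show (if v.val.2.2.2 = u.val.1 then some (some u) else none) = some (some u)
        rw [if_pos hvu]
      rw [hstep, ih u t]
      simp only [List.Chain']
      rw [List.isChain_cons_cons, List.getLast_cons (List.cons_ne_nil _ _)]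
      tauto
    · have hstep : (accDFA A).step (some (some v)) u = none := by
        show (if v.val.2.2.2 = u.val.1 then some (some u) else none) = none
        rw [if_neg hvu]
      rw [hstep, accDFA_dead]
      simp only [List.Chain']
      rw [List.isChain_cons_cons]
      simp only [show ((none : Option (Option ↥A.Δ)) = some (some t)) ↔ False by simp]
      tauto

lemma isAccepting_regular {M K : Type} [Monoid M] [Semiring K] (A : WAut M K) :
    haveI : Fintype ↥A.Δ := A.finΔ.fintype
    Language.IsRegular ({r : List ↥A.Δ | A.IsAccepting r} : Language ↥A.Δ) := by
  classical
  haveI : Fintype ↥A.Δ := A.finΔ.fintype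
  refine ⟨Option (Option ↥A.Δ), inferInstance, accDFA A, ?_⟩
  ext r
  have hm : r ∈ (accDFA A).accepts ↔
      ∃ t : ↥A.Δ, (accDFA A).evalFrom (some none) r = some (some t) ∧ t.val.2.2.2 ∈ A.final :=
    Iff.rfl
  rw [hm]
  show _ ↔ A.IsAccepting r
  cases r with
  | nil =>
    constructor
    · rintro ⟨t, ht, -⟩
      exact absurd ht (by simp [DFA.evalFrom])
    · rintro ⟨-, hne, -⟩
      exact absurd rfl hne
  | cons u r =>
    have hev : (accDFA A).evalFrom (some none) (u :: r)
        = (accDFA A).evalFrom ((accDFA A).step (some none) u) r := rfl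
    by_cases hi : u.val.1 ∈ A.init
    · have hstep : (accDFA A).step (some none) u = some (some u) := by
        show (if u.val.1 ∈ A.init then some (some u) else none) = some (some u)
        rw [if_pos hi]
      rw [hev, hstep]
      constructor
      · rintro ⟨t, ht, hfin⟩
        obtain ⟨hch, hlast⟩ := (accDFA_aux A r u t).mp ht
        exact ⟨hch, List.cons_ne_nil _ _, by simpa using hi, by rw [hlast]; exact hfin⟩
      · rintro ⟨hrun, hne, hhead, hlast⟩
        refine ⟨(u :: r).getLast (List.cons_ne_nil _ _),
          (accDFA_aux A r u _).mpr ⟨hrun, rfl⟩, hlast⟩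
    · have hstep : (accDFA A).step (some none) u = none := by
        show (if u.val.1 ∈ A.init then some (some u) else none) = none
        rw [if_neg hi]
      rw [hev, hstep, accDFA_dead]
      constructor
      · rintro ⟨t, ht, -⟩
        exact absurd ht (by simp)
      · rintro ⟨-, hne, hhead, -⟩
        exact absurd (by simpa using hhead) hi

/-- Over a pre-rational monoid `M` and a rationally additive semiring `K`, every
`K`-automaton `A` over `M` is valid: for every `m ∈ M`, the sum of the weights of the
accepting runs of `A` labelled by `m` exists in `K`. -/
theorem waut_valid (M K : Type) [Monoid M] [Semiring K] (R : RatAdd K)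
    (hM : IsPreRational M) (A : WAut M K) (m : M) :
    (WAut.sem R A m).isSome := by
  classical
  haveI : Fintype ↥A.Δ := A.finΔ.fintype
  set μ : FreeMonoid ↥A.Δ →* M := FreeMonoid.lift (fun t : ↥A.Δ => t.val.2.1) with hμ
  have h1 : Language.IsRegular {w : List ↥A.Δ | μ (FreeMonoid.ofList w) = m} :=
    hM ↥A.Δ inferInstance μ m
  have h2 := isAccepting_regular A
  have h3 := isRegular_inter h1 h2
  obtain ⟨s, hs⟩ := sum_regular R h3 (fun t : ↥A.Δ => t.val.2.2.1)
  set L : Set (List ↥A.Δ) :=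
    {w : List ↥A.Δ | w ∈ {w : List ↥A.Δ | μ (FreeMonoid.ofList w) = m}
      ∧ w ∈ {r : List ↥A.Δ | A.IsAccepting r}} with hL
  let e : {r : List ↥A.Δ // A.IsAccepting r ∧ A.label r = m} ≃ {w : List ↥A.Δ // w ∈ L} :=
    { toFun := fun r => ⟨r.val, by
        refine ⟨?_, r.prop.1⟩
        show μ (FreeMonoid.ofList r.val) = m
        rw [hμ, FreeMonoid.lift_ofList]
        exact r.prop.2⟩
      invFun := fun w => ⟨w.val, by
        refine ⟨w.prop.2, ?_⟩
        have := w.prop.1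
        rw [hμ] at this
        show (w.val.map (fun t : ↥A.Δ => t.val.2.1)).prod = m
        rw [← FreeMonoid.lift_ofList]
        exact this⟩
      left_inv := fun r => Subtype.ext rfl
      right_inv := fun w => Subtype.ext rfl }
  have hsum := R.sum_equiv e (fun w : {w : List ↥A.Δ // w ∈ L} => (w.val.map
    (fun t : ↥A.Δ => t.val.2.2.1)).prod) s hs
  rw [WAut.sem]
  have hfinal : R.sum (fun r : {r : List ↥A.Δ // A.IsAccepting r ∧ A.label r = m} =>
      A.weight r.val) = some s := hsum
  rw [hfinal]
  rfl
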